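/- In the Zorn vector-matrix algebra Z(R) over a commutative ring R, the norm is multiplicative: N(X·Y) = N(X)·N(Y) for all X, Y ∈ Z(R). -/

import Mathlib

/-- The underlying module of the Zorn vector-matrix algebra over a commutative ring `R`:
elements are `(a, v, w, b)` with `a, b ∈ R` and `v, w ∈ R³`. -/
abbrev ZornAlg (R : Type*) [CommRing R] := R × (Fin 3 → R) × (Fin 3 → R) × R

variable {R : Type*} [CommRing R]

/-- Multiplication of the Zorn vector-matrix (split octonion) algebra:
`(a,v,w,b)·(c,x,y,d) = (ac + ⟨v,y⟩, a•x + d•v + w×y, c•w + b•y − v×x, bd + ⟨w,x⟩)`. -/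
def zornMul (X Y : ZornAlg R) : ZornAlg R :=
  (X.1 * Y.1 + dotProduct X.2.1 Y.2.2.1,
   X.1 • Y.2.1 + Y.2.2.2 • X.2.1 + crossProduct X.2.2.1 Y.2.2.1,
   Y.1 • X.2.2.1 + X.2.2.2 • Y.2.2.1 - crossProduct X.2.1 Y.2.1,
   X.2.2.2 * Y.2.2.2 + dotProduct X.2.2.1 Y.2.1)

/-- The multiplicative unit `1 = (1, 0, 0, 1)` of the Zorn algebra. -/
def zornOne : ZornAlg R := (1, 0, 0, 1)

/-- The norm `N(a,v,w,b) = ab − ⟨v,w⟩` of the Zorn algebra. -/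
def zornNorm (X : ZornAlg R) : R := X.1 * X.2.2.2 - dotProduct X.2.1 X.2.2.1

/-- The trace `tr(a,v,w,b) = a + b` of the Zorn algebra. -/
def zornTrace (X : ZornAlg R) : R := X.1 + X.2.2.2

/-- The conjugation `(a,v,w,b)‾ = (b, −v, −w, a)` of the Zorn algebra. -/
def zornConj (X : ZornAlg R) : ZornAlg R := (X.2.2.2, -X.2.1, -X.2.2.1, X.1)

/-- The norm of the Zorn vector-matrix algebra is multiplicative. -/
theorem zornNorm_mul (X Y : ZornAlg R) :
    zornNorm (zornMul X Y) = zornNorm X * zornNorm Y := by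
  obtain ⟨a, v, w, b⟩ := X
  obtain ⟨c, x, y, d⟩ := Y
  simp only [zornNorm, zornMul, dotProduct, crossProduct, Fin.sum_univ_three,
    Pi.add_apply, Pi.sub_apply, Pi.smul_apply, smul_eq_mul, LinearMap.mk₂_apply,
    Matrix.cons_val_zero, Matrix.cons_val_one, Matrix.head_cons,
    Matrix.cons_val_two, Matrix.tail_cons]
  ring
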